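/- Classical Stein characterization, converse direction: let μ be a Borel probability measure on ℝ with ∫|x| dμ < ∞ such that ∫_ℝ (x·φ'(x) − σ²·φ''(x)) dμ(x) = 0 for all φ ∈ C²_b(ℝ) (bounded with bounded first and second derivatives), where σ > 0. Then μ = N(0, σ²). -/

import Mathlib

open MeasureTheory ProbabilityTheory Real Set
open scoped ENNReal NNReal Topology

noncomputable def stepUp (b δ x : ℝ) : ℝ := Real.smoothTransition ((x - b + δ)/δ)
noncomputable def stepDn (b δ x : ℝ) : ℝ := Real.smoothTransition ((b + δ - x)/δ)

lemma stepUp_continuous (b δ : ℝ) : Continuous (stepUp b δ) :=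
  Real.smoothTransition.continuous.comp (by fun_prop)

lemma stepDn_continuous (b δ : ℝ) : Continuous (stepDn b δ) :=
  Real.smoothTransition.continuous.comp (by fun_prop)

lemma stepUp_nonneg (b δ x : ℝ) : 0 ≤ stepUp b δ x := Real.smoothTransition.nonneg _
lemma stepDn_nonneg (b δ x : ℝ) : 0 ≤ stepDn b δ x := Real.smoothTransition.nonneg _
lemma stepUp_le_one (b δ x : ℝ) : stepUp b δ x ≤ 1 := Real.smoothTransition.le_one _
lemma stepDn_le_one (b δ x : ℝ) : stepDn b δ x ≤ 1 := Real.smoothTransition.le_one _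

lemma stepUp_one {b δ x : ℝ} (hδ : 0 < δ) (h : b ≤ x) : stepUp b δ x = 1 :=
  Real.smoothTransition.one_of_one_le (by rw [le_div_iff₀ hδ]; linarith)

lemma stepUp_zero {b δ x : ℝ} (hδ : 0 < δ) (h : x ≤ b - δ) : stepUp b δ x = 0 :=
  Real.smoothTransition.zero_of_nonpos (by rw [div_nonpos_iff]; right; constructor <;> linarith)

lemma stepDn_one {b δ x : ℝ} (hδ : 0 < δ) (h : x ≤ b) : stepDn b δ x = 1 :=
  Real.smoothTransition.one_of_one_le (by rw [le_div_iff₀ hδ]; linarith)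

lemma stepDn_zero {b δ x : ℝ} (hδ : 0 < δ) (h : b + δ ≤ x) : stepDn b δ x = 0 :=
  Real.smoothTransition.zero_of_nonpos (by rw [div_nonpos_iff]; right; constructor <;> linarith)

noncomputable def bump (l r δ x : ℝ) : ℝ := stepUp l δ x * stepDn r δ x

lemma bump_continuous (l r δ : ℝ) : Continuous (bump l r δ) :=
  (stepUp_continuous l δ).mul (stepDn_continuous r δ)

lemma bump_nonneg (l r δ x : ℝ) : 0 ≤ bump l r δ x :=
  mul_nonneg (stepUp_nonneg _ _ _) (stepDn_nonneg _ _ _)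

lemma bump_le_one (l r δ x : ℝ) : bump l r δ x ≤ 1 :=
  mul_le_one₀ (stepUp_le_one _ _ _) (stepDn_nonneg _ _ _) (stepDn_le_one _ _ _)

lemma bump_one {l r δ x : ℝ} (hδ : 0 < δ) (h1 : l ≤ x) (h2 : x ≤ r) : bump l r δ x = 1 := by
  rw [bump, stepUp_one hδ h1, stepDn_one hδ h2, mul_one]

lemma bump_support {l r δ : ℝ} (hδ : 0 < δ) :
    Function.support (bump l r δ) ⊆ Icc (l - δ) (r + δ) := by
  intro x hx
  simp only [Function.mem_support, bump] at hx
  constructor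
  · by_contra h
    exact hx (by rw [stepUp_zero hδ (by linarith), zero_mul])
  · by_contra h
    exact hx (by rw [stepDn_zero hδ (by linarith), mul_zero])

lemma bump_hasCompactSupport {l r δ : ℝ} (hδ : 0 < δ) : HasCompactSupport (bump l r δ) :=
  HasCompactSupport.of_support_subset_isCompact isCompact_Icc (bump_support hδ)

open MeasureTheory ProbabilityTheory Real Set intervalIntegral

lemma stein_vanish (σ : ℝ) (hσ : 0 < σ) (μ : Measure ℝ) [IsProbabilityMeasure μ]
    (hstein : ∀ φ : ℝ → ℝ, ContDiff ℝ 2 φ →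
      (∃ C, ∀ x, |φ x| ≤ C) → (∃ C, ∀ x, |deriv φ x| ≤ C) →
      (∃ C, ∀ x, |deriv (deriv φ) x| ≤ C) →
      ∫ x, (x * deriv φ x - σ ^ 2 * deriv (deriv φ) x) ∂μ = 0)
    (h : ℝ → ℝ) (hc : Continuous h) (hsupp : HasCompactSupport h)
    (hW : ∫ x, h x * Real.exp (-x^2/(2*σ^2)) = 0) : ∫ x, h x ∂μ = 0 := by
  obtain ⟨r, hr⟩ : ∃ r, tsupport h ⊆ Metric.closedBall 0 r :=
    hsupp.isBounded.subset_closedBall 0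
  set R : ℝ := |r| + 1 with hR
  have hsub : tsupport h ⊆ Ioo (-R) R := by
    refine hr.trans ?_
    intro x hx
    simp only [Metric.mem_closedBall, Real.dist_eq, sub_zero] at hx
    have : |x| ≤ |r| := hx.trans (le_abs_self r)
    rw [abs_le] at this
    constructor <;> simp only [hR] <;> linarith [this.1, this.2]
  have hzero : ∀ x, x ∉ Ioo (-R) R → h x = 0 := fun x hx =>
    image_eq_zero_of_notMem_tsupport (fun hxs => hx (hsub hxs))
  set w : ℝ → ℝ := fun x => Real.exp (-x^2/(2*σ^2)) with hw
  have hwc : Continuous w := by fun_prop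
  set g : ℝ → ℝ := fun x => h x * w x with hg
  have hgc : Continuous g := hc.mul hwc
  have hgsupp : Function.support g ⊆ Ioo (-R) R := by
    intro x hx
    by_contra hxn
    exact hx (by simp only [hg, hzero x hxn, zero_mul])
  set F : ℝ → ℝ := fun x => ∫ t in (-R)..x, g t with hF
  have hFd : ∀ x, HasDerivAt F (g x) x := fun x =>
    integral_hasDerivAt_right (hgc.intervalIntegrable _ _)
      (hgc.stronglyMeasurableAtFilter _ _) hgc.continuousAt
  have hFleft : ∀ x ≤ -R, F x = 0 := by
    intro x hx
    have : EqOn g 0 (uIcc (-R) x) := by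
      intro t ht
      rw [uIcc_of_ge hx] at ht
      have : t ∉ Ioo (-R) R := fun hmem => absurd ht.2 (not_le.mpr hmem.1)
      simp only [hg, hzero t this, zero_mul, Pi.zero_apply]
    show (∫ t in (-R)..x, g t) = 0
    rw [intervalIntegral.integral_congr this]
    simp
  have hFright : ∀ x, R ≤ x → F x = 0 := by
    intro x hx
    have hss : Function.support g ⊆ Ioc (-R) x :=
      hgsupp.trans (Ioo_subset_Ioc_self.trans (Ioc_subset_Ioc_right (by linarith)))
    have : F x = ∫ t, g t := intervalIntegral.integral_eq_integral_of_support_subset hss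
    rw [this, ← hW]
  set E : ℝ → ℝ := fun x => Real.exp (x^2/(2*σ^2)) with hE
  have hEd : ∀ x, HasDerivAt E (x/σ^2 * E x) x := by
    intro x
    have h1 : HasDerivAt (fun x : ℝ => x^2/(2*σ^2)) (x/σ^2) x := by
      have := (hasDerivAt_pow 2 x).div_const (2*σ^2)
      refine this.congr_deriv (Eq.symm ?_)
      field_simp
      ring
    simpa [hE, mul_comm] using h1.exp
  have hEw : ∀ x, E x * w x = 1 := by
    intro x
    rw [hE, hw, ← Real.exp_add]
    simp only [← Real.exp_zero]
    congr 1
    ring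
  set f : ℝ → ℝ := fun x => E x * F x with hf
  have hfd : ∀ x, HasDerivAt f (x/σ^2 * f x + h x) x := by
    intro x
    have := (hEd x).mul (hFd x)
    refine this.congr_deriv (Eq.symm ?_)
    simp only [hf, hg]
    have : E x * (h x * w x) = h x := by rw [mul_comm (E x), mul_assoc, mul_comm (w x), hEw x, mul_one]
    ring_nf
    nlinarith [hEw x]
  have hσ2 : σ^2 ≠ 0 := by positivity
  have hfc : Continuous f := continuous_iff_continuousAt.mpr fun x => (hfd x).continuousAt
  have hfsupp : Function.support f ⊆ Icc (-R) R := by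
    intro x hx
    by_contra hxn
    rw [mem_Icc, not_and_or] at hxn
    have hF0 : F x = 0 := by
      rcases hxn with h1 | h1
      · exact hFleft x (by push_neg at h1; linarith)
      · exact hFright x (by push_neg at h1; linarith)
    exact hx (by simp [hf, hF0])
  have hfcs : HasCompactSupport f :=
    HasCompactSupport.of_support_subset_isCompact isCompact_Icc hfsupp
  set f' : ℝ → ℝ := fun x => x/σ^2 * f x + h x with hf'def
  have hf'c : Continuous f' := ((continuous_id.div_const _).mul hfc).add hc
  have hf'supp : Function.support f' ⊆ Icc (-R) R := by
    intro x hx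
    by_contra hxn
    apply hx
    have h0 : f x = 0 := by
      by_contra hfx
      exact hxn (hfsupp hfx)
    have h1 : h x = 0 := hzero x (fun hmem => hxn ⟨hmem.1.le, hmem.2.le⟩)
    simp [hf'def, h0, h1]
  have hf'cs : HasCompactSupport f' :=
    HasCompactSupport.of_support_subset_isCompact isCompact_Icc hf'supp
  set φ : ℝ → ℝ := fun x => ∫ t in (0:ℝ)..x, f t with hφdef
  have hφd : ∀ x, HasDerivAt φ (f x) x := fun x =>
    integral_hasDerivAt_right (hfc.intervalIntegrable _ _)
      (hfc.stronglyMeasurableAtFilter _ _) hfc.continuousAt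
  have hdφ : deriv φ = f := funext fun x => (hφd x).deriv
  have hdf : deriv f = f' := funext fun x => (hfd x).deriv
  have hC2 : ContDiff ℝ 2 φ := by
    rw [show (2 : WithTop ℕ∞) = 1 + 1 by norm_num, contDiff_succ_iff_deriv]
    refine ⟨fun x => (hφd x).differentiableAt, by intro hω; exact absurd hω (by norm_num), ?_⟩
    rw [hdφ, contDiff_one_iff_deriv, hdf]
    exact ⟨fun x => (hfd x).differentiableAt, hf'c⟩
  obtain ⟨C1, hC1⟩ := hfcs.exists_bound_of_continuous hfc
  obtain ⟨C2', hC2'⟩ := hf'cs.exists_bound_of_continuous hf'c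
  have hfint : Integrable f volume := hfc.integrable_of_hasCompactSupport hfcs
  have hφbd : ∃ C, ∀ x, |φ x| ≤ C := by
    refine ⟨∫ t, |f t|, fun x => ?_⟩
    calc |φ x| ≤ ∫ t in Set.uIoc 0 x, |f t| := by
          simpa [Real.norm_eq_abs] using
            intervalIntegral.norm_integral_le_integral_norm_uIoc (f := f) (a := 0) (b := x)
              (μ := volume)
      _ ≤ ∫ t, |f t| := setIntegral_le_integral hfint.abs (ae_of_all _ fun t => abs_nonneg _)
  have key := hstein φ hC2 hφbd
    ⟨C1, fun x => by rw [hdφ]; simpa [Real.norm_eq_abs] using hC1 x⟩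
    ⟨C2', fun x => by rw [hdφ, hdf]; simpa [Real.norm_eq_abs] using hC2' x⟩
  have hpt : ∀ x : ℝ, x * deriv φ x - σ ^ 2 * deriv (deriv φ) x = -(σ^2) * h x := by
    intro x
    rw [hdφ, hdf]
    simp only [hf'def]
    field_simp
    ring
  simp_rw [hpt] at key
  rw [MeasureTheory.integral_const_mul] at key
  rcases mul_eq_zero.mp key with h0 | h0
  · exact absurd (neg_eq_zero.mp h0) hσ2
  · exact h0


open Filter Topology

lemma hcs_sub {f g : ℝ → ℝ} (hf : HasCompactSupport f) (hg : HasCompactSupport g) :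
    HasCompactSupport (fun x => f x - g x) := by
  apply HasCompactSupport.of_support_subset_isCompact (hf.union hg)
  intro x hx
  rw [Function.mem_support] at hx
  by_contra hxn
  simp only [Set.mem_union] at hxn
  push_neg at hxn
  rw [image_eq_zero_of_notMem_tsupport hxn.1, image_eq_zero_of_notMem_tsupport hxn.2, sub_zero] at hx
  exact hx rfl

set_option maxHeartbeats 1000000 in

theorem stmt_7 (σ : ℝ) (hσ : 0 < σ) (μ : Measure ℝ) [IsProbabilityMeasure μ]
    (hmom : Integrable (fun x => |x|) μ)
    (hstein : ∀ φ : ℝ → ℝ, ContDiff ℝ 2 φ →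
      (∃ C, ∀ x, |φ x| ≤ C) → (∃ C, ∀ x, |deriv φ x| ≤ C) →
      (∃ C, ∀ x, |deriv (deriv φ) x| ≤ C) →
      ∫ x, (x * deriv φ x - σ ^ 2 * deriv (deriv φ) x) ∂μ = 0) :
    μ = gaussianReal 0 ⟨σ ^ 2, sq_nonneg σ⟩ := by
  have hσ2 : (0:ℝ) < σ^2 := by positivity
  set v : ℝ≥0 := ⟨σ ^ 2, sq_nonneg σ⟩ with hvdef
  have hv0 : v ≠ 0 := by
    intro hcon
    have : (v : ℝ) = 0 := by rw [hcon]; simp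
    rw [hvdef] at this
    change σ^2 = 0 at this
    linarith
  set w : ℝ → ℝ := fun x => Real.exp (-x^2/(2*σ^2)) with hwdef
  have hwc : Continuous w := by fun_prop
  have hwpos : ∀ x, 0 < w x := fun x => Real.exp_pos _
  have hwint : Integrable w := by
    refine (integrable_exp_neg_mul_sq (show (0:ℝ) < 1/(2*σ^2) by positivity)).congr
      (ae_of_all _ fun x => ?_)
    show Real.exp (-(1/(2*σ^2)) * x^2) = w x
    simp only [hwdef]
    congr 1
    field_simp
  -- the reference bump ρ
  set ρ : ℝ → ℝ := bump 0 1 1 with hρdef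
  have hρc : Continuous ρ := bump_continuous 0 1 1
  have hρcs : HasCompactSupport ρ := bump_hasCompactSupport one_pos
  have hρw : Integrable (fun x => ρ x * w x) :=
    (hρc.mul hwc).integrable_of_hasCompactSupport hρcs.mul_right
  have hρWpos : 0 < ∫ x, ρ x * w x := by
    rw [integral_pos_iff_support_of_nonneg
      (fun x => mul_nonneg (bump_nonneg _ _ _ _) (hwpos x).le) hρw]
    have hsub : Ioo (0:ℝ) 1 ⊆ Function.support (fun x => ρ x * w x) := by
      intro x hx
      simp only [Function.mem_support]
      rw [hρdef, bump_one one_pos hx.1.le hx.2.le, one_mul]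
      exact (hwpos x).ne'
    calc (0:ℝ≥0∞) < volume (Ioo (0:ℝ) 1) := by simp
      _ ≤ _ := measure_mono hsub
  have hρμint : Integrable ρ μ := hρc.integrable_of_hasCompactSupport hρcs
  set K : ℝ := (∫ x, ρ x ∂μ) / (∫ x, ρ x * w x) with hKdef
  -- key identity for all compactly supported continuous g
  have hkey : ∀ g : ℝ → ℝ, Continuous g → HasCompactSupport g →
      ∫ x, g x ∂μ = K * ∫ x, g x * w x := by
    intro g hgc hgcs
    set c : ℝ := (∫ x, g x * w x) / (∫ x, ρ x * w x) with hcdef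
    have hgw : Integrable (fun x => g x * w x) :=
      (hgc.mul hwc).integrable_of_hasCompactSupport hgcs.mul_right
    have h0 : ∫ x, (g x - c * ρ x) * w x = 0 := by
      have hpt : ∀ x, (g x - c * ρ x) * w x = g x * w x - c * (ρ x * w x) := fun x => by ring
      simp_rw [hpt]
      rw [integral_sub hgw (hρw.const_mul c), MeasureTheory.integral_const_mul, hcdef]
      field_simp
      ring
    have hccs : HasCompactSupport (fun x => g x - c * ρ x) :=
      hcs_sub hgcs hρcs.mul_left
    have hvan := stein_vanish σ hσ μ hstein (fun x => g x - c * ρ x)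
      (hgc.sub (continuous_const.mul hρc)) hccs h0
    have hgμ : Integrable g μ := hgc.integrable_of_hasCompactSupport hgcs
    rw [integral_sub hgμ (hρμint.const_mul c), MeasureTheory.integral_const_mul, sub_eq_zero] at hvan
    rw [hvan, hKdef, hcdef]
    field_simp
  -- main pointwise CDF identity
  have main : ∀ a : ℝ, (μ (Iic a)).toReal = K * ∫ x in Iic a, w x := by
    intro a
    set hn : ℕ → ℝ → ℝ := fun n x => stepUp (-(n:ℝ)) 1 x * stepDn a (1/((n:ℝ)+1)) x with hhn
    have hδ : ∀ n : ℕ, (0:ℝ) < 1/((n:ℝ)+1) := fun n => by positivity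
    have hnc : ∀ n, Continuous (hn n) := fun n =>
      (stepUp_continuous _ _).mul (stepDn_continuous _ _)
    have hncs : ∀ n, HasCompactSupport (hn n) := by
      intro n
      apply HasCompactSupport.of_support_subset_isCompact
        (isCompact_Icc (a := -(n:ℝ)-1) (b := a + 1/((n:ℝ)+1)))
      intro x hx
      simp only [Function.mem_support, hhn] at hx
      constructor
      · by_contra hlt
        push_neg at hlt
        exact hx (by rw [stepUp_zero one_pos (by linarith), zero_mul])
      · by_contra hlt
        push_neg at hlt
        exact hx (by rw [stepDn_zero (hδ n) (by linarith), mul_zero])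
    have hbd1 : ∀ n x, 0 ≤ hn n x := fun n x =>
      mul_nonneg (stepUp_nonneg _ _ _) (stepDn_nonneg _ _ _)
    have hbd : ∀ n x, |hn n x| ≤ 1 := by
      intro n x
      rw [abs_of_nonneg (hbd1 n x)]
      exact mul_le_one₀ (stepUp_le_one _ _ _) (stepDn_nonneg _ _ _) (stepDn_le_one _ _ _)
    have hlim : ∀ x, Tendsto (fun n => hn n x) atTop
        (𝓝 (Set.indicator (Iic a) (fun _ => (1:ℝ)) x)) := by
      intro x
      apply tendsto_nhds_of_eventually_eq
      rcases le_or_gt x a with hxa | hxa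
      · filter_upwards [Filter.eventually_ge_atTop (Nat.ceil (-x))] with n hn'
        have h1 : -(n:ℝ) ≤ x := by
          have h2 : (-x) ≤ (n:ℝ) := (Nat.le_ceil (-x)).trans (Nat.cast_le.mpr hn')
          linarith
        simp only [hhn]
        rw [stepUp_one one_pos h1, stepDn_one (hδ n) hxa, indicator_of_mem (mem_Iic.mpr hxa), mul_one]
      · obtain ⟨n₀, hn₀⟩ : ∃ n₀ : ℕ, 1/((n₀:ℝ)+1) < x - a := exists_nat_one_div_lt (by linarith)
        filter_upwards [Filter.eventually_ge_atTop n₀] with n hn'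
        have h2 : 1/((n:ℝ)+1) ≤ 1/((n₀:ℝ)+1) := by
          apply one_div_le_one_div_of_le (by positivity)
          have : (n₀:ℝ) ≤ (n:ℝ) := Nat.cast_le.mpr hn'
          linarith
        simp only [hhn]
        rw [stepDn_zero (hδ n) (by linarith), mul_zero,
          indicator_of_notMem (notMem_Iic.mpr hxa)]
    have t1 : Tendsto (fun n => ∫ x, hn n x ∂μ) atTop
        (𝓝 (∫ x, Set.indicator (Iic a) (fun _ => (1:ℝ)) x ∂μ)) := by
      apply tendsto_integral_of_dominated_convergence (fun _ => (1:ℝ))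
      · exact fun n => (hnc n).aestronglyMeasurable
      · exact integrable_const 1
      · exact fun n => ae_of_all _ (fun x => by simpa [Real.norm_eq_abs] using hbd n x)
      · exact ae_of_all _ hlim
    rw [integral_indicator_const (1:ℝ) measurableSet_Iic, smul_eq_mul, mul_one] at t1
    have t2 : Tendsto (fun n => ∫ x, hn n x * w x) atTop
        (𝓝 (∫ x in Iic a, w x)) := by
      rw [← MeasureTheory.integral_indicator measurableSet_Iic]
      apply tendsto_integral_of_dominated_convergence w
      · exact fun n => ((hnc n).mul hwc).aestronglyMeasurable
      · exact hwint
      · intro n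
        apply ae_of_all _ (fun x => ?_)
        rw [Real.norm_eq_abs, abs_mul, abs_of_pos (hwpos x)]
        calc |hn n x| * w x ≤ 1 * w x := by
              apply mul_le_mul_of_nonneg_right (hbd n x) (hwpos x).le
          _ = w x := one_mul _
      · apply ae_of_all _ (fun x => ?_)
        have := (hlim x).mul (tendsto_const_nhds (x := w x))
        convert this using 2
        by_cases hx : x ∈ Iic a
        · rw [indicator_of_mem hx, indicator_of_mem hx, one_mul]
        · rw [indicator_of_notMem hx, indicator_of_notMem hx, zero_mul]
    have t1' : Tendsto (fun n => ∫ x, hn n x ∂μ) atTop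
        (𝓝 (K * ∫ x in Iic a, w x)) := by
      have heq : (fun n => ∫ x, hn n x ∂μ) = fun n => K * ∫ x, hn n x * w x :=
        funext fun n => hkey (hn n) (hnc n) (hncs n)
      rw [heq]
      exact t2.const_mul K
    exact tendsto_nhds_unique t1 t1'
  -- limits as a → ∞
  set Iw : ℝ := ∫ x, w x with hIwdef
  have t3 : Tendsto (fun n : ℕ => ∫ x in Iic (n:ℝ), w x) atTop (𝓝 Iw) := by
    simp_rw [← MeasureTheory.integral_indicator measurableSet_Iic]
    apply tendsto_integral_of_dominated_convergence w
    · exact fun n => (hwc.aestronglyMeasurable).indicator measurableSet_Iic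
    · exact hwint
    · intro n
      apply ae_of_all _ (fun x => ?_)
      rw [Real.norm_eq_abs]
      by_cases hx : x ∈ Iic (n:ℝ)
      · rw [indicator_of_mem hx, abs_of_pos (hwpos x)]
      · rw [indicator_of_notMem hx, abs_zero]
        exact (hwpos x).le
    · apply ae_of_all _ (fun x => ?_)
      apply tendsto_nhds_of_eventually_eq
      filter_upwards [Filter.eventually_ge_atTop (Nat.ceil x)] with n hn'
      have : x ≤ (n:ℝ) := (Nat.le_ceil x).trans (Nat.cast_le.mpr hn')
      rw [indicator_of_mem (mem_Iic.mpr this)]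
  have t4 : Tendsto (fun n : ℕ => (μ (Iic (n:ℝ))).toReal) atTop (𝓝 1) := by
    have h0 := (tendsto_measure_Iic_atTop μ).comp (tendsto_natCast_atTop_atTop (R := ℝ))
    have h1 := (ENNReal.tendsto_toReal (a := μ univ) (by simp)).comp h0
    simpa [Function.comp_def] using h1
  have hKIw : K * Iw = 1 := by
    refine tendsto_nhds_unique ?_ t4
    have heq : (fun n : ℕ => (μ (Iic (n:ℝ))).toReal)
        = fun n : ℕ => K * ∫ x in Iic (n:ℝ), w x := funext fun n => main _
    rw [heq] at t4 ⊢
    exact t3.const_mul K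
  -- gaussian side
  have hγ : ∀ a : ℝ, ((gaussianReal 0 v) (Iic a)).toReal
      = (√(2*π*σ^2))⁻¹ * ∫ x in Iic a, w x := by
    intro a
    rw [gaussianReal_apply_eq_integral 0 hv0 (Iic a)]
    rw [ENNReal.toReal_ofReal (integral_nonneg (fun x => gaussianPDFReal_nonneg _ _ _))]
    have hpt : ∀ x, gaussianPDFReal 0 v x = (√(2*π*σ^2))⁻¹ * w x := by
      intro x
      rw [gaussianPDFReal, hwdef]
      simp only [hvdef, NNReal.coe_mk, sub_zero]
      rfl
    simp_rw [hpt]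
    rw [MeasureTheory.integral_const_mul]
  have hc0Iw : (√(2*π*σ^2))⁻¹ * Iw = 1 := by
    have h1 := integral_gaussianPDFReal_eq_one 0 hv0
    have hpt : ∀ x, gaussianPDFReal 0 v x = (√(2*π*σ^2))⁻¹ * w x := by
      intro x
      rw [gaussianPDFReal, hwdef]
      simp only [hvdef, NNReal.coe_mk, sub_zero]
      rfl
    rw [show (fun x => gaussianPDFReal 0 v x) = fun x => (√(2*π*σ^2))⁻¹ * w x from funext hpt]
      at h1
    rw [MeasureTheory.integral_const_mul] at h1
    exact h1
  have hIw0 : Iw ≠ 0 := by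
    intro hcon
    rw [hcon, mul_zero] at hc0Iw
    norm_num at hc0Iw
  have hKc : K = (√(2*π*σ^2))⁻¹ :=
    mul_right_cancel₀ hIw0 (hKIw.trans hc0Iw.symm)
  refine MeasureTheory.Measure.ext_of_Iic μ _ (fun a => ?_)
  have h1 : (μ (Iic a)).toReal = ((gaussianReal 0 v) (Iic a)).toReal := by
    rw [main a, hγ a, hKc]
  exact (ENNReal.toReal_eq_toReal_iff' (measure_ne_top _ _) (measure_ne_top _ _)).mp h1
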